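/- Fix real numbers $x > y > 1$ and define $g : (0,\infty) \to \mathbb{R}$ by $g(q) = x - y + (y-1)x^{1+q} - (x-1)y^{1+q}$. Then $g(q) > 0$ for all $q > 0$. -/

import Mathlib

theorem stmt_1 (x y : ℝ) (hy : 1 < y) (hxy : y < x) (q : ℝ) (hq : 0 < q) :
    0 < x - y + (y - 1) * x ^ (1 + q) - (x - 1) * y ^ (1 + q) := by
  have hx1 : (0:ℝ) < x - 1 := by linarith
  have hsc := strictConvexOn_rpow (p := 1 + q) (by linarith)
  have h := hsc.2 (Set.mem_Ici.2 (by norm_num : (0:ℝ) ≤ 1))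
      (Set.mem_Ici.2 (by linarith : (0:ℝ) ≤ x)) (by linarith)
      (show (0:ℝ) < (x - y) / (x - 1) from (div_pos (by linarith) hx1))
      (show (0:ℝ) < (y - 1) / (x - 1) from (div_pos (by linarith) hx1))
      (by field_simp; ring)
  simp only [smul_eq_mul] at h
  have hcomb : (x - y) / (x - 1) * 1 + (y - 1) / (x - 1) * x = y := by
    field_simp; ring
  rw [hcomb] at h
  have h1 : (1:ℝ) ^ (1 + q) = 1 := Real.one_rpow _
  rw [h1] at h
  have := mul_lt_mul_of_pos_left h hx1
  have he : (x - 1) * ((x - y) / (x - 1) * 1 + (y - 1) / (x - 1) * x ^ (1 + q))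
      = (x - y) + (y - 1) * x ^ (1 + q) := by field_simp
  rw [he] at this
  linarith
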